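/- (Fenn–Rourke) Let p : X → G be an augmented rack, and equip X with the rack structure x ◁ y := x·p(y). Then the induced map on the associated group gives a crossed module of groups As(X) → G: there exists a right action of G on As(X) by group automorphisms satisfying i(x)·g = i(x·g) for all x ∈ X, g ∈ G, such that the unique group homomorphism p̂ : As(X) → G with p̂ ∘ i = p is equivariant, p̂(a·g) = g⁻¹ p̂(a) g for all a ∈ As(X), g ∈ G, and satisfies the Peiffer identity a·p̂(b) = b⁻¹ a b for all a,b ∈ As(X). -/

import Mathlib

/-- A right rack. -/
class RightRack (R : Type*) where
  act : R → R → R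
  act_bij : ∀ y : R, Function.Bijective (fun x => act x y)
  self_distrib : ∀ x y z : R, act (act x y) z = act (act x z) (act y z)

/-- The relations `y⁻¹ x⁻¹ y (x ◁ y)` defining the associated group of a rack. -/
def rackRels (R : Type*) [RightRack R] : Set (FreeGroup R) :=
  {w | ∃ x y : R,
    w = (FreeGroup.of y)⁻¹ * (FreeGroup.of x)⁻¹ * FreeGroup.of y *
        FreeGroup.of (RightRack.act x y)}

/-- The associated group `As(R)` of a rack `R`. -/
def AsGroup (R : Type*) [RightRack R] : Type _ := PresentedGroup (rackRels R)

instance (R : Type*) [RightRack R] : Group (AsGroup R) :=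
  inferInstanceAs (Group (PresentedGroup (rackRels R)))

/-- The canonical map `i : R → As(R)`. -/
def asOf {R : Type*} [RightRack R] (r : R) : AsGroup R :=
  PresentedGroup.of (rels := rackRels R) r

/-- An augmented rack over a group `G`. -/
structure AugRack (X G : Type*) [Group G] where
  smul : X → G → X
  smul_one : ∀ x : X, smul x 1 = x
  smul_mul : ∀ (x : X) (g h : G), smul (smul x g) h = smul x (g * h)
  p : X → G
  aug : ∀ (x : X) (g : G), p (smul x g) = g⁻¹ * p x * g

lemma asOf_rel {R : Type*} [RightRack R] (x y : R) :
    (asOf y)⁻¹ * (asOf x)⁻¹ * asOf y * asOf (RightRack.act x y) = 1 := by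
  have : ((QuotientGroup.mk ((FreeGroup.of y)⁻¹ * (FreeGroup.of x)⁻¹ * FreeGroup.of y *
      FreeGroup.of (RightRack.act x y))) : PresentedGroup (rackRels R)) = 1 := by
    rw [QuotientGroup.eq_one_iff]
    exact Subgroup.subset_normalClosure ⟨x, y, rfl⟩
  exact this

lemma asOf_act {R : Type*} [RightRack R] (x y : R) :
    asOf (RightRack.act x y) = (asOf y)⁻¹ * asOf x * asOf y := by
  have h := asOf_rel x y
  have h2 : asOf (RightRack.act x y) = ((asOf y)⁻¹ * (asOf x)⁻¹ * asOf y)⁻¹ :=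
    eq_inv_of_mul_eq_one_right h
  rw [h2]; group

/-- Fenn–Rourke: for an augmented rack `p : X → G`, with `X` equipped
with the rack structure `x ◁ y := x · p(y)`, the induced map `p̂ : As(X) → G` together
with the induced right `G`-action on `As(X)` by group automorphisms is a crossed module
of groups: `p̂` is the unique group homomorphism with `p̂ ∘ i = p`, the action satisfies
`i(x) · g = i(x · g)`, `p̂` is equivariant, and the Peiffer identity holds. -/
theorem augRack_gives_group_crossed_module (X G : Type*) [Group G] [RightRack X]
    (A : AugRack X G)
    (hrack : ∀ x y : X, RightRack.act x y = A.smul x (A.p y)) :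
    ∃ (phat : AsGroup X →* G) (ρ : AsGroup X → G → AsGroup X),
      (∀ x : X, phat (asOf x) = A.p x) ∧
      (∀ ψ : AsGroup X →* G, (∀ x : X, ψ (asOf x) = A.p x) → ψ = phat) ∧
      (∀ a : AsGroup X, ρ a 1 = a) ∧
      (∀ (a : AsGroup X) (g h : G), ρ (ρ a g) h = ρ a (g * h)) ∧
      (∀ (a b : AsGroup X) (g : G), ρ (a * b) g = ρ a g * ρ b g) ∧
      (∀ (x : X) (g : G), ρ (asOf x) g = asOf (A.smul x g)) ∧
      (∀ (a : AsGroup X) (g : G), phat (ρ a g) = g⁻¹ * phat a * g) ∧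
      (∀ a b : AsGroup X, ρ a (phat b) = b⁻¹ * a * b) := by
  -- p̂
  have hp : ∀ r ∈ rackRels X, FreeGroup.lift A.p r = 1 := by
    rintro r ⟨x, y, rfl⟩
    simp only [map_mul, map_inv, FreeGroup.lift_apply_of, hrack, A.aug]
    group
  set phat : AsGroup X →* G := PresentedGroup.toGroup hp with hphat
  have phat_of : ∀ x : X, phat (asOf x) = A.p x := fun x => PresentedGroup.toGroup.of hp
  -- the action homs
  have hφ : ∀ g : G, ∀ r ∈ rackRels X,
      FreeGroup.lift (fun x => asOf (A.smul x g)) r = 1 := by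
    intro g r hr
    obtain ⟨x, y, rfl⟩ := hr
    simp only [map_mul, map_inv, FreeGroup.lift_apply_of]
    have hact : RightRack.act x y = A.smul x (A.p y) := hrack x y
    have : A.smul (RightRack.act x y) g = RightRack.act (A.smul x g) (A.smul y g) := by
      rw [hrack (A.smul x g) (A.smul y g), A.aug, hact, A.smul_mul, A.smul_mul]
      congr 1
      group
    rw [this]
    exact asOf_rel (A.smul x g) (A.smul y g)
  set φ : G → (AsGroup X →* AsGroup X) := fun g => PresentedGroup.toGroup (hφ g) with hφdef
  have φ_of : ∀ (g : G) (x : X), φ g (asOf x) = asOf (A.smul x g) := by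
    intro g x; exact PresentedGroup.toGroup.of (hφ g)
  set ρ : AsGroup X → G → AsGroup X := fun a g => φ g a with hρdef
  have ρ_one : ∀ a : AsGroup X, ρ a 1 = a := by
    intro a
    have : φ 1 = MonoidHom.id (AsGroup X) := by
      apply PresentedGroup.ext
      intro x
      show φ 1 (asOf x) = asOf x
      rw [φ_of, A.smul_one]
    show φ 1 a = a
    rw [this]; rfl
  have ρ_mul : ∀ (a : AsGroup X) (g h : G), ρ (ρ a g) h = ρ a (g * h) := by
    intro a g h
    have : (φ h).comp (φ g) = φ (g * h) := by
      apply PresentedGroup.ext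
      intro x
      show φ h (φ g (asOf x)) = φ (g * h) (asOf x)
      rw [φ_of, φ_of, φ_of, A.smul_mul]
    calc ρ (ρ a g) h = ((φ h).comp (φ g)) a := rfl
      _ = φ (g * h) a := by rw [this]
  have ρ_hom : ∀ (a b : AsGroup X) (g : G), ρ (a * b) g = ρ a g * ρ b g := by
    intro a b g; exact map_mul (φ g) a b
  have equiv : ∀ (a : AsGroup X) (g : G), phat (ρ a g) = g⁻¹ * phat a * g := by
    intro a g
    have : phat.comp (φ g) = ((MulAut.conj g⁻¹).toMonoidHom).comp phat := by
      apply PresentedGroup.ext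
      intro x
      show phat (φ g (asOf x)) = g⁻¹ * phat (asOf x) * g⁻¹⁻¹
      rw [φ_of, phat_of, phat_of, A.aug, inv_inv]
    calc phat (ρ a g) = phat.comp (φ g) a := rfl
      _ = g⁻¹ * phat a * g := by rw [this]; simp [MulAut.conj]
  -- Peiffer identity
  have peif_gen : ∀ (y : X) (a : AsGroup X),
      ρ a (A.p y) = (asOf y)⁻¹ * a * asOf y := by
    intro y a
    have : φ (A.p y) = ((MulAut.conj (asOf y)⁻¹).toMonoidHom).comp
        (MonoidHom.id (AsGroup X)) := by
      apply PresentedGroup.ext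
      intro x
      show φ (A.p y) (asOf x) = (asOf y)⁻¹ * asOf x * (asOf y)⁻¹⁻¹
      rw [φ_of, ← hrack, asOf_act, inv_inv]
    show φ (A.p y) a = _
    rw [this]; simp [MulAut.conj]
  have peif : ∀ a b : AsGroup X, ρ a (phat b) = b⁻¹ * a * b := by
    intro a b
    revert a
    refine PresentedGroup.induction_on (C := fun b : AsGroup X => ∀ a, ρ a (phat b) = b⁻¹ * a * b) b ?_
    intro z
    induction z using FreeGroup.induction_on with
    | C1 =>
      intro a
      rw [map_one]
      show ρ a (phat 1) = (1 : AsGroup X)⁻¹ * a * 1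
      simp [ρ_one]
    | of x =>
      intro a
      have hx : (PresentedGroup.mk (rackRels X)) (FreeGroup.of x) = asOf x := rfl
      rw [hx, phat_of]
      exact peif_gen x a
    | inv_of x _ =>
      intro a
      have hx : (PresentedGroup.mk (rackRels X)) (FreeGroup.of x)⁻¹ = (asOf x)⁻¹ := rfl
      rw [hx, map_inv, phat_of]
      have key : ρ ((asOf x) * a * (asOf x)⁻¹) (A.p x) = a := by
        rw [peif_gen]
        group
      have h4 : ρ a (A.p x)⁻¹ = ρ (ρ ((asOf x) * a * (asOf x)⁻¹) (A.p x)) (A.p x)⁻¹ := by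
        rw [key]
      rw [h4, ρ_mul, mul_inv_cancel, ρ_one]
      group
    | mul v w hv hw =>
      intro a
      erw [map_mul, map_mul, ← ρ_mul, hv, hw]
      exact (by intro u' w'; group : ∀ u' w' : AsGroup X,
        w'⁻¹ * (u'⁻¹ * a * u') * w' = (u' * w')⁻¹ * a * (u' * w')) _ _
  -- uniqueness
  have uniq : ∀ ψ : AsGroup X →* G, (∀ x : X, ψ (asOf x) = A.p x) → ψ = phat := by
    intro ψ hψ
    apply PresentedGroup.ext
    intro x
    show ψ (asOf x) = phat (asOf x)
    rw [hψ, phat_of]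
  exact ⟨phat, ρ, phat_of, uniq, ρ_one, ρ_mul, ρ_hom, fun x g => φ_of g x,
    equiv, peif⟩
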